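/- Fix α with 0 < α < 1, let χ be the (unique) non-principal Dirichlet character modulo 3, and let a : ℕ → ℂ be the coefficients of the Dirichlet series product f(s) = (1 − 3^{1−α−s})^{-1} · L(s, χ), i.e. a_n = Σ_{3^k m = n} 3^{(1−α)k} χ(m). Then a is completely multiplicative, σ_c(f) = 1 − α, and σ_a(f) = 1; in particular σ_a(f) − σ_c(f) = α. -/

import Mathlib

open Filter Topology

/-- `N`-th partial sum of the Dirichlet series `∑ a_n n^{-s}` at the point `s`. -/
noncomputable def dirichletPartial (a : ℕ → ℂ) (s : ℂ) (N : ℕ) : ℂ :=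
  ∑ n ∈ Finset.range N, a (n + 1) / ((n : ℂ) + 1) ^ s

/-- The Dirichlet series `∑ a_n n^{-σ}` converges (as a limit of partial sums). -/
def DirichletConvergesAt (a : ℕ → ℂ) (σ : ℝ) : Prop :=
  ∃ l : ℂ, Tendsto (dirichletPartial a (σ : ℂ)) atTop (𝓝 l)

/-- The series `∑ a_n n^{-σ - it}` converges uniformly in `t ∈ ℝ`. -/
def DirichletConvergesUniformlyAt (a : ℕ → ℂ) (σ : ℝ) : Prop :=
  ∃ g : ℝ → ℂ,
    TendstoUniformly (fun N (t : ℝ) => dirichletPartial a ((σ : ℂ) + (t : ℂ) * Complex.I) N) g atTop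

/-- The series `∑ |a_n| n^{-σ}` converges. -/
def DirichletAbsConvergesAt (a : ℕ → ℂ) (σ : ℝ) : Prop :=
  Summable fun n : ℕ => ‖a (n + 1)‖ / ((n : ℝ) + 1) ^ σ

/-- Abscissa of (simple) convergence. -/
noncomputable def sigmaC (a : ℕ → ℂ) : ℝ := sInf {σ : ℝ | DirichletConvergesAt a σ}

/-- Abscissa of uniform convergence. -/
noncomputable def sigmaB (a : ℕ → ℂ) : ℝ := sInf {σ : ℝ | DirichletConvergesUniformlyAt a σ}

/-- Abscissa of absolute convergence. -/
noncomputable def sigmaA (a : ℕ → ℂ) : ℝ := sInf {σ : ℝ | DirichletAbsConvergesAt a σ}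

/-- `a : ℕ → ℂ` is multiplicative: `a 1 = 1` and `a (m n) = a m * a n` for coprime `m, n ≥ 1`. -/
def IsMultiplicativeFun (a : ℕ → ℂ) : Prop :=
  a 1 = 1 ∧ ∀ m n : ℕ, 1 ≤ m → 1 ≤ n → Nat.Coprime m n → a (m * n) = a m * a n

/-- `a : ℕ → ℂ` is completely multiplicative. -/
def IsCompletelyMultiplicativeFun (a : ℕ → ℂ) : Prop :=
  a 1 = 1 ∧ ∀ m n : ℕ, 1 ≤ m → 1 ≤ n → a (m * n) = a m * a n


lemma chi_two {χ : DirichletCharacter ℂ 3} (hχ : χ ≠ 1) : χ 2 = -1 := by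
  have h4 : χ 2 * χ 2 = 1 := by
    rw [← map_mul]
    have : (2 * 2 : ZMod 3) = 1 := by decide
    rw [this, map_one]
  rcases mul_self_eq_one_iff.mp h4 with h | h
  · exfalso; apply hχ
    ext x
    have hx : ∀ y : (ZMod 3)ˣ, (y : ZMod 3) = 1 ∨ (y : ZMod 3) = 2 := by decide
    rcases hx x with hy | hy
    · rw [hy, map_one, map_one]
    · rw [hy, h, MulChar.one_apply (by decide)]
  · exact h

lemma chi_vals {χ : DirichletCharacter ℂ 3} (hχ : χ ≠ 1) (n : ℕ) :
    χ (n : ZMod 3) = if n % 3 = 1 then 1 else if n % 3 = 2 then -1 else 0 := by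
  rw [← ZMod.natCast_mod n 3]
  have h3 := Nat.mod_lt n (show 0 < 3 by norm_num)
  interval_cases h : n % 3 <;> simp_all
  · exact χ.map_nonunit (by decide)
  · exact chi_two hχ

section
variable {α : ℝ} {χ : DirichletCharacter ℂ 3} {a : ℕ → ℂ}

lemma a_decomp
    (ha : ∀ k m : ℕ, ¬ (3 ∣ m) → a (3 ^ k * m) = (((3:ℝ) ^ ((1-α)*(k:ℝ)) : ℝ) : ℂ) * χ (m : ZMod 3))
    (n : ℕ) (hn : n ≠ 0) : ∃ k u : ℕ, ¬ 3 ∣ u ∧ n = 3 ^ k * u := by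
  exact ⟨n.factorization 3, ordCompl[3] n, Nat.not_dvd_ordCompl (by norm_num) hn,
    (Nat.ordProj_mul_ordCompl_eq_self n 3).symm⟩

lemma a_cm
    (ha : ∀ k m : ℕ, ¬ (3 ∣ m) → a (3 ^ k * m) = (((3:ℝ) ^ ((1-α)*(k:ℝ)) : ℝ) : ℂ) * χ (m : ZMod 3)) :
    IsCompletelyMultiplicativeFun a := by
  constructor
  · have := ha 0 1 (by norm_num)
    simpa using this
  · intro m n hm hn
    obtain ⟨k1, u, hu, rfl⟩ := a_decomp ha m (by omega)
    obtain ⟨k2, v, hv, rfl⟩ := a_decomp ha n (by omega)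
    have huv : ¬ 3 ∣ (u * v) := by
      rw [Nat.Prime.dvd_mul (by norm_num)]
      tauto
    have key : 3 ^ k1 * u * (3 ^ k2 * v) = 3 ^ (k1 + k2) * (u * v) := by ring
    rw [key, ha _ _ huv, ha _ _ hu, ha _ _ hv]
    push_cast
    rw [mul_add, Real.rpow_add (by norm_num : (0:ℝ) < 3)]
    push_cast
    rw [map_mul]
    ring


-- partial sums of χ
lemma chiSum_eq (hχ : χ ≠ 1) (N : ℕ) :
    ∑ n ∈ Finset.range N, χ ((n+1 : ℕ) : ZMod 3)
      = if N % 3 = 1 then 1 else 0 := by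
  induction N with
  | zero => simp
  | succ N ih =>
    rw [Finset.sum_range_succ, ih, chi_vals hχ]
    have h3 : N % 3 = 0 ∨ N % 3 = 1 ∨ N % 3 = 2 := by omega
    rcases h3 with h | h | h <;>
      · have h1 : (N+1) % 3 = (N % 3 + 1) % 3 := by omega
        simp [h, h1]

lemma chiSum_norm_le (hχ : χ ≠ 1) (N : ℕ) :
    ‖∑ n ∈ Finset.range N, χ ((n+1 : ℕ) : ZMod 3)‖ ≤ 1 := by
  rw [chiSum_eq hχ]
  split <;> simp

lemma A_rec
    (ha : ∀ k m : ℕ, ¬ (3 ∣ m) → a (3 ^ k * m) = (((3:ℝ) ^ ((1-α)*(k:ℝ)) : ℝ) : ℂ) * χ (m : ZMod 3))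
    (N : ℕ) :
    ∑ n ∈ Finset.range N, a (n+1)
      = (∑ n ∈ Finset.range N, χ ((n+1 : ℕ) : ZMod 3))
        + (((3:ℝ) ^ (1-α) : ℝ) : ℂ) * ∑ m ∈ Finset.range (N/3), a (m+1) := by
  have hnd : ∀ n : ℕ, ¬ 3 ∣ (n+1) → a (n+1) = χ ((n+1 : ℕ) : ZMod 3) := by
    intro n hn
    have := ha 0 (n+1) hn
    simpa using this
  have hsplit := Finset.sum_filter_add_sum_filter_not (Finset.range N)
    (fun n => 3 ∣ (n+1)) (fun n => a (n+1))
  rw [← hsplit]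
  -- non-divisible part equals full χ sum
  have hnotdvd : ∑ n ∈ (Finset.range N).filter (fun n => ¬ 3 ∣ (n+1)), a (n+1)
      = ∑ n ∈ Finset.range N, χ ((n+1 : ℕ) : ZMod 3) := by
    rw [Finset.sum_congr rfl (fun n hn => hnd n (Finset.mem_filter.mp hn).2)]
    apply Finset.sum_filter_of_ne
    intro n _ hne
    intro hdvd
    apply hne
    have : ((n+1 : ℕ) : ZMod 3) = 0 := by
      obtain ⟨c, hc⟩ := hdvd
      rw [hc, Nat.cast_mul, show ((3:ℕ):ZMod 3) = 0 by decide, zero_mul]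
    rw [this, MulChar.map_nonunit _ (by decide)]
  -- divisible part
  have h3m : ∀ m : ℕ, a (3*(m+1)) = (((3:ℝ)^(1-α) : ℝ) : ℂ) * a (m+1) := by
    intro m
    rw [(a_cm ha).2 3 (m+1) (by norm_num) (by omega)]
    congr 1
    have := ha 1 1 (by norm_num)
    simpa using this
  have hdvd : ∑ n ∈ (Finset.range N).filter (fun n => 3 ∣ (n+1)), a (n+1)
      = (((3:ℝ) ^ (1-α) : ℝ) : ℂ) * ∑ m ∈ Finset.range (N/3), a (m+1) := by
    rw [Finset.mul_sum]
    apply Finset.sum_nbij' (fun n => (n-2)/3) (fun m => 3*m+2)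
    · intro n hn
      simp only [Finset.mem_filter, Finset.mem_range] at hn ⊢
      omega
    · intro m hm
      simp only [Finset.mem_filter, Finset.mem_range] at hm ⊢
      omega
    · intro n hn
      simp only [Finset.mem_filter, Finset.mem_range] at hn
      omega
    · intro m hm
      omega
    · intro n hn
      simp only [Finset.mem_filter, Finset.mem_range] at hn
      rw [show n + 1 = 3 * ((n-2)/3 + 1) by omega, h3m]
  rw [hnotdvd, hdvd]
  ring

lemma A_bound_aux (hχ : χ ≠ 1) (hα1 : α < 1)
    (ha : ∀ k m : ℕ, ¬ (3 ∣ m) → a (3 ^ k * m) = (((3:ℝ) ^ ((1-α)*(k:ℝ)) : ℝ) : ℂ) * χ (m : ZMod 3)) :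
    ∀ N : ℕ, 1 ≤ N → ‖∑ n ∈ Finset.range N, a (n+1)‖
      ≤ ((3:ℝ)^(1-α)/((3:ℝ)^(1-α)-1)) * (N:ℝ)^(1-α) - 1/((3:ℝ)^(1-α)-1) := by
  have hr : 1 < (3:ℝ)^(1-α) :=
    Real.one_lt_rpow_iff_of_pos (by norm_num) |>.mpr (Or.inl ⟨by norm_num, by linarith⟩)
  set r := (3:ℝ)^(1-α) with hrdef
  have hd1 : (1/(r-1)) * (r-1) = 1 := by rw [one_div, inv_mul_cancel₀ (by linarith : r-1 ≠ 0)]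
  have hdpos : 0 < 1/(r-1) := by
    have h0 : 0 < r - 1 := by linarith
    positivity
  have hceq : r/(r-1) = r * (1/(r-1)) := by ring
  set d := 1/(r-1) with hddef
  set c := r/(r-1) with hcdef
  have hcpos : 0 < c := by
    have h0 : 0 < r - 1 := by linarith
    rw [hcdef]; positivity
  intro N
  induction N using Nat.strong_induction_on with
  | _ N ih =>
    intro hN
    rw [A_rec ha N]
    have hN1 : (1:ℝ) ≤ (N:ℝ) := by exact_mod_cast hN
    have hx1 : (1:ℝ) ≤ (N:ℝ)^(1-α) := Real.one_le_rpow hN1 (by linarith)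
    set x := (N:ℝ)^(1-α) with hxdef
    have hXle := chiSum_norm_le hχ N
    by_cases h3 : N < 3
    · have hN3 : N / 3 = 0 := by omega
      rw [hN3]
      simp only [Finset.range_zero, Finset.sum_empty, mul_zero, add_zero]
      nlinarith
    · have hd3 : 1 ≤ N / 3 := by omega
      have ihv := ih (N/3) (by omega) hd3
      set y := ((N/3 : ℕ):ℝ)^(1-α) with hydef
      have hy0 : 0 ≤ y := Real.rpow_nonneg (Nat.cast_nonneg _) _
      have hAy0 : (0:ℝ) ≤ ‖∑ m ∈ Finset.range (N/3), a (m+1)‖ := norm_nonneg _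
      have hry : r * y ≤ x := by
        have hle : ((N/3 : ℕ):ℝ) ≤ (N:ℝ)/3 := Nat.cast_div_le
        have h2 : y ≤ ((N:ℝ)/3)^(1-α) :=
          Real.rpow_le_rpow (Nat.cast_nonneg _) hle (by linarith)
        have h3' : ((N:ℝ)/3)^(1-α) = x / r := by
          rw [hxdef, hrdef, Real.div_rpow (by linarith) (by norm_num)]
        rw [h3'] at h2
        calc r * y ≤ r * (x/r) := by nlinarith
          _ = x := by field_simp
      calc ‖(∑ n ∈ Finset.range N, χ ((n+1 : ℕ) : ZMod 3))
              + ((r:ℝ) : ℂ) * ∑ m ∈ Finset.range (N/3), a (m+1)‖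
          ≤ ‖∑ n ∈ Finset.range N, χ ((n+1 : ℕ) : ZMod 3)‖
              + ‖((r:ℝ) : ℂ) * ∑ m ∈ Finset.range (N/3), a (m+1)‖ := norm_add_le _ _
        _ = ‖∑ n ∈ Finset.range N, χ ((n+1 : ℕ) : ZMod 3)‖
              + r * ‖∑ m ∈ Finset.range (N/3), a (m+1)‖ := by
            rw [norm_mul, Complex.norm_real, Real.norm_eq_abs, abs_of_pos (by linarith)]
        _ ≤ 1 + r * (c * y - d) := by nlinarith
        _ ≤ c * x - d := by nlinarith

lemma A_bound (hχ : χ ≠ 1) (hα1 : α < 1)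
    (ha : ∀ k m : ℕ, ¬ (3 ∣ m) → a (3 ^ k * m) = (((3:ℝ) ^ ((1-α)*(k:ℝ)) : ℝ) : ℂ) * χ (m : ZMod 3))
    (N : ℕ) : ‖∑ n ∈ Finset.range N, a (n+1)‖
      ≤ ((3:ℝ)^(1-α)/((3:ℝ)^(1-α)-1)) * (N:ℝ)^(1-α) := by
  have hr : 1 < (3:ℝ)^(1-α) :=
    Real.one_lt_rpow_iff_of_pos (by norm_num) |>.mpr (Or.inl ⟨by norm_num, by linarith⟩)
  rcases Nat.eq_zero_or_pos N with rfl | hN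
  · simp [Real.zero_rpow (by linarith : (1:ℝ)-α ≠ 0)]
  · have h0 : 0 < (3:ℝ)^(1-α) - 1 := by linarith
    have h1 : 0 < 1/((3:ℝ)^(1-α)-1) := by positivity
    linarith [A_bound_aux hχ hα1 ha N hN]

lemma not_conv_lt (hα1 : α < 1)
    (ha : ∀ k m : ℕ, ¬ (3 ∣ m) → a (3 ^ k * m) = (((3:ℝ) ^ ((1-α)*(k:ℝ)) : ℝ) : ℂ) * χ (m : ZMod 3))
    {σ : ℝ} (hσ : σ < 1-α) : ¬ DirichletConvergesAt a σ := by
  rintro ⟨l, hl⟩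
  have hterm : Tendsto (fun N => a (N+1) / ((N:ℂ)+1)^(σ:ℂ)) atTop (𝓝 0) := by
    have h := ((hl.comp (tendsto_add_atTop_nat 1)).sub hl)
    simp only [sub_self] at h
    apply h.congr
    intro N
    simp only [Function.comp]
    unfold dirichletPartial
    rw [Finset.sum_range_succ]
    ring
  have hs : Tendsto (fun k : ℕ => (3:ℕ)^k - 1) atTop atTop :=
    (tendsto_sub_atTop_nat 1).comp (tendsto_pow_atTop_atTop_of_one_lt (by norm_num))
  have hcomp := (hterm.comp hs).norm
  simp only [norm_zero] at hcomp
  have hlow : ∀ k : ℕ, (1:ℝ) ≤ ‖a ((3:ℕ)^k - 1 + 1) / ((((3:ℕ)^k - 1 : ℕ):ℂ)+1)^(σ:ℂ)‖ := by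
    intro k
    have h1 : (3:ℕ)^k - 1 + 1 = 3^k := by
      have : 1 ≤ (3:ℕ)^k := Nat.one_le_pow _ _ (by norm_num)
      omega
    have hcast : (((3:ℕ)^k - 1 : ℕ):ℂ) + 1 = (((3:ℝ)^k : ℝ) : ℂ) := by
      rw [Nat.cast_sub (Nat.one_le_pow _ _ (by norm_num))]
      push_cast
      ring
    rw [h1, hcast]
    have haval := ha k 1 (by norm_num)
    rw [mul_one] at haval
    rw [haval]
    have hχ1 : χ ((1:ℕ) : ZMod 3) = 1 := by rw [Nat.cast_one, map_one]
    rw [hχ1, mul_one, ← Complex.ofReal_cpow (by positivity), norm_div,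
      Complex.norm_real, Complex.norm_real, Real.norm_eq_abs, Real.norm_eq_abs,
      abs_of_pos (Real.rpow_pos_of_pos (by norm_num) _),
      abs_of_pos (Real.rpow_pos_of_pos (by positivity) _)]
    rw [one_le_div (Real.rpow_pos_of_pos (by positivity) _)]
    have he : ((3:ℝ)^k) ^ (σ:ℝ) = (3:ℝ) ^ ((k:ℝ) * σ) := by
      rw [← Real.rpow_natCast 3 k, ← Real.rpow_mul (by norm_num)]
    rw [he]
    apply Real.rpow_le_rpow_of_exponent_le (by norm_num)
    have hk : (0:ℝ) ≤ (k:ℝ) := Nat.cast_nonneg k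
    nlinarith
  have := ge_of_tendsto' hcomp (fun k => hlow k)
  linarith

lemma abs_conv (hα0 : 0 < α) (hα1 : α < 1)
    (ha : ∀ k m : ℕ, ¬ (3 ∣ m) → a (3 ^ k * m) = (((3:ℝ) ^ ((1-α)*(k:ℝ)) : ℝ) : ℂ) * χ (m : ZMod 3))
    {σ : ℝ} (hσ : 1 < σ) : DirichletAbsConvergesAt a σ := by
  show Summable (fun n : ℕ => ‖a (n+1)‖ / ((n:ℝ)+1)^σ)
  set r2 := (3:ℝ)^(1-α-σ) with hr2def
  have hr2pos : 0 < r2 := Real.rpow_pos_of_pos (by norm_num) _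
  have hr2lt : r2 < 1 := Real.rpow_lt_one_of_one_lt_of_neg (by norm_num) (by linarith)
  have hgeo : Summable (fun k : ℕ => r2 ^ k) := summable_geometric_of_lt_one hr2pos.le hr2lt
  have hzeta : Summable (fun j : ℕ => ((j:ℝ)+1)^(-σ)) := by
    have h := (Real.summable_nat_rpow (p := -σ)).mpr (by linarith)
    have h2 := (summable_nat_add_iff 1).mpr h
    refine h2.congr fun i => ?_
    push_cast; ring_nf
  have hF : Summable (fun p : ℕ × ℕ => r2 ^ p.1 * ((p.2:ℝ)+1)^(-σ)) :=
    hgeo.mul_of_nonneg hzeta (fun k => pow_nonneg hr2pos.le k)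
      (fun j => Real.rpow_nonneg (by positivity) _)
  have hinj : Function.Injective
      (fun n : ℕ => ((n+1).factorization 3, ordCompl[3] (n+1) - 1)) := by
    intro m n hmn
    simp only [Prod.mk.injEq] at hmn
    have hm := Nat.ordProj_mul_ordCompl_eq_self (m+1) 3
    have hn := Nat.ordProj_mul_ordCompl_eq_self (n+1) 3
    have hmpos : 0 < ordCompl[3] (m+1) := Nat.ordCompl_pos 3 (by omega)
    have hnpos : 0 < ordCompl[3] (n+1) := Nat.ordCompl_pos 3 (by omega)
    have h2 : ordCompl[3] (m+1) = ordCompl[3] (n+1) := by omega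
    rw [h2, hmn.1] at hm
    omega
  apply Summable.of_nonneg_of_le (fun n => by positivity) _ (hF.comp_injective hinj)
  intro n
  simp only [Function.comp]
  set k := (n+1).factorization 3 with hk
  set u := ordCompl[3] (n+1) with hu
  have hupos : 0 < u := Nat.ordCompl_pos 3 (by omega)
  have hnd : ¬ 3 ∣ u := Nat.not_dvd_ordCompl (by norm_num) (by omega)
  have hdecomp : 3^k * u = n+1 := Nat.ordProj_mul_ordCompl_eq_self (n+1) 3
  have hcast : ((n:ℝ)+1) = (3:ℝ)^k * (u:ℝ) := by
    rw [show ((n:ℝ)+1) = ((n+1 : ℕ):ℝ) by push_cast; ring, ← hdecomp]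
    push_cast; ring
  have hau : a (n+1) = (((3:ℝ) ^ ((1-α)*(k:ℝ)) : ℝ) : ℂ) * χ (u : ZMod 3) := by
    rw [← hdecomp]; exact ha k u hnd
  have hnorm : ‖a (n+1)‖ ≤ (3:ℝ) ^ ((1-α)*(k:ℝ)) := by
    rw [hau, norm_mul, Complex.norm_real, Real.norm_eq_abs,
      abs_of_pos (Real.rpow_pos_of_pos (by norm_num) _)]
    calc (3:ℝ) ^ ((1-α)*(k:ℝ)) * ‖χ (u : ZMod 3)‖
        ≤ (3:ℝ) ^ ((1-α)*(k:ℝ)) * 1 := by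
          apply mul_le_mul_of_nonneg_left (χ.norm_le_one _)
            (Real.rpow_nonneg (by norm_num) _)
      _ = (3:ℝ) ^ ((1-α)*(k:ℝ)) := mul_one _
  have hu1 : ((u - 1 : ℕ):ℝ) + 1 = (u:ℝ) := by
    rw [Nat.cast_sub hupos]; push_cast; ring
  simp only [hu1]
  have hden : ((n:ℝ)+1) ^ σ = ((3:ℝ)^k)^σ * (u:ℝ)^σ := by
    rw [hcast, Real.mul_rpow (by positivity) (by positivity)]
  rw [div_le_iff₀ (by positivity), hden]
  have hr2k : r2 ^ k * ((3:ℝ)^k)^σ = (3:ℝ) ^ ((1-α)*(k:ℝ)) := by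
    rw [hr2def, ← Real.rpow_natCast ((3:ℝ)^(1-α-σ)) k, ← Real.rpow_mul (by norm_num),
      ← Real.rpow_natCast (3:ℝ) k, ← Real.rpow_mul (by norm_num),
      ← Real.rpow_add (by norm_num)]
    ring_nf
  have hrhs : r2 ^ k * (u:ℝ)^(-σ) * (((3:ℝ)^k)^σ * (u:ℝ)^σ) = r2^k * ((3:ℝ)^k)^σ := by
    rw [Real.rpow_neg (by positivity)]
    field_simp
  rw [hrhs, hr2k]
  exact hnorm

lemma sigmaA_div (hχ : χ ≠ 1)
    (ha : ∀ k m : ℕ, ¬ (3 ∣ m) → a (3 ^ k * m) = (((3:ℝ) ^ ((1-α)*(k:ℝ)) : ℝ) : ℂ) * χ (m : ZMod 3))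
    {σ : ℝ} (h0 : 0 < σ) (h1 : σ < 1) : ¬ DirichletAbsConvergesAt a σ := by
  intro h'
  have h : Summable (fun n : ℕ => ‖a (n+1)‖ / ((n:ℝ)+1)^σ) := h'
  have hval : ∀ j : ℕ, ‖a (3*j+1)‖ = 1 := by
    intro j
    have hnd : ¬ 3 ∣ (3*j+1) := by omega
    have h0' := ha 0 (3*j+1) hnd
    simp only [pow_zero, one_mul, Nat.cast_zero, mul_zero, Real.rpow_zero,
      Complex.ofReal_one] at h0'
    rw [h0', chi_vals hχ, if_pos (by omega)]
    norm_num
  have h2 : Summable (fun j : ℕ => 1 / ((3*(j:ℝ))+1)^σ) := by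
    have hinj3 : Function.Injective (fun j : ℕ => 3*j) := by
      intro i j hij
      have : 3*i = 3*j := hij
      omega
    have hc := h.comp_injective hinj3
    refine hc.congr fun j => ?_
    simp only [Function.comp]
    rw [hval j]
    push_cast
    ring_nf
  have h3 : Summable (fun j : ℕ => ((j:ℝ)+1)^(-σ)) := by
    apply Summable.of_nonneg_of_le (fun j => by positivity) _ (h2.mul_left 3)
    intro j
    have hj1 : (1:ℝ) ≤ (j:ℝ)+1 := by have : (0:ℝ) ≤ j := Nat.cast_nonneg j; linarith
    have hb : ((3*(j:ℝ))+1)^σ ≤ 3*((j:ℝ)+1)^σ := by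
      calc ((3*(j:ℝ))+1)^σ ≤ (3*((j:ℝ)+1))^σ :=
            Real.rpow_le_rpow (by positivity) (by linarith) h0.le
        _ = (3:ℝ)^σ * ((j:ℝ)+1)^σ := Real.mul_rpow (by norm_num) (by positivity)
        _ ≤ 3 * ((j:ℝ)+1)^σ := by
            have h31 : (3:ℝ)^σ ≤ (3:ℝ)^(1:ℝ) :=
              Real.rpow_le_rpow_of_exponent_le (by norm_num) h1.le
            rw [Real.rpow_one] at h31
            have := Real.rpow_pos_of_pos (by positivity : (0:ℝ) < (j:ℝ)+1) σ
            nlinarith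
    rw [Real.rpow_neg (by positivity), mul_one_div, inv_eq_one_div,
      div_le_div_iff₀ (by positivity) (by positivity)]
    nlinarith
  have h4 : Summable (fun n : ℕ => ((n:ℝ))^(-σ)) := by
    rw [← summable_nat_add_iff 1]
    refine h3.congr fun j => ?_
    push_cast; ring_nf
  rw [Real.summable_nat_rpow] at h4
  linarith


end


lemma abs_mono {b : ℕ → ℂ} {σ σ' : ℝ} (h : σ ≤ σ') (hs : DirichletAbsConvergesAt b σ) :
    DirichletAbsConvergesAt b σ' := by
  have hs' : Summable (fun n : ℕ => ‖b (n+1)‖ / ((n:ℝ)+1)^σ) := hs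
  show Summable (fun n : ℕ => ‖b (n+1)‖ / ((n:ℝ)+1)^σ')
  apply Summable.of_nonneg_of_le (fun n => by positivity) _ hs'
  intro n
  have h1 : (1:ℝ) ≤ (n:ℝ)+1 := by
    have : (0:ℝ) ≤ n := Nat.cast_nonneg n
    linarith
  exact div_le_div_of_nonneg_left (norm_nonneg _) (Real.rpow_pos_of_pos (by linarith) _)
    (Real.rpow_le_rpow_of_exponent_le h1 h)



lemma rpow_diff_le {σ : ℝ} (hσ : 0 < σ) (x : ℝ) (hx : 1 ≤ x) :
    x ^ (-σ) - (x+1) ^ (-σ) ≤ σ * x ^ (-σ - 1) := by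
  have hx0 : (0:ℝ) < x := lt_of_lt_of_le one_pos hx
  obtain ⟨c, hc, hderiv⟩ := exists_hasDerivAt_eq_slope (fun t => t ^ (-σ))
    (fun t => (-σ) * t ^ (-σ - 1)) (by linarith : x < x + 1)
    (by
      apply ContinuousOn.rpow_const continuousOn_id
      intro t ht
      simp only [id]; exact Or.inl (by rw [Set.mem_Icc] at ht; nlinarith))
    (fun t ht => Real.hasDerivAt_rpow_const (Or.inl (by rw [Set.mem_Ioo] at ht; nlinarith)))
  rw [Set.mem_Ioo] at hc
  have hc0 : (0:ℝ) < c := by linarith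
  have key : (x+1) ^ (-σ) - x ^ (-σ) = (-σ) * c ^ (-σ - 1) := by
    rw [hderiv]; field_simp; ring
  have hle : c ^ (-σ - 1) ≤ x ^ (-σ - 1) :=
    Real.rpow_le_rpow_of_nonpos hx0 hc.1.le (by linarith)
  nlinarith [Real.rpow_pos_of_pos hc0 (-σ - 1)]

lemma dirichletPartial_eq (a : ℕ → ℂ) (σ : ℝ) (N : ℕ) :
    dirichletPartial a (σ : ℂ) N
      = ∑ n ∈ Finset.range N, ((((n:ℝ)+1) ^ (-σ) : ℝ) : ℂ) • a (n + 1) := by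
  unfold dirichletPartial
  refine Finset.sum_congr rfl fun n _ => ?_
  have h1 : ((n : ℂ) + 1) ^ (σ : ℂ) = ((((n:ℝ)+1) ^ σ : ℝ) : ℂ) := by
    rw [Complex.ofReal_cpow (by positivity)]
    push_cast; ring_nf
  rw [h1, Real.rpow_neg (by positivity)]
  push_cast
  rw [smul_eq_mul]
  ring

lemma dirichlet_converges_of_partial_bound {a : ℕ → ℂ} {θ C : ℝ} (hθ : 0 ≤ θ) (hC : 0 ≤ C)
    (hA : ∀ N : ℕ, ‖∑ n ∈ Finset.range N, a (n+1)‖ ≤ C * (N:ℝ) ^ θ)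
    {σ : ℝ} (hσ : θ < σ) : DirichletConvergesAt a σ := by
  have hσ0 : 0 < σ := lt_of_le_of_lt hθ hσ
  set f : ℕ → ℂ := fun i => ((((i:ℝ)+1) ^ (-σ) : ℝ) : ℂ) with hf
  set g : ℕ → ℂ := fun i => a (i+1) with hg
  set A : ℕ → ℂ := fun N => ∑ i ∈ Finset.range N, g i with hAdef
  have hsum : Summable (fun i : ℕ => (f (i+1) - f i) • A (i+1)) := by
    refine Summable.of_norm_bounded (g := fun i => (C * σ) * ((i:ℝ)+1) ^ (θ - σ - 1)) ?_ ?_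
    · have h := (Real.summable_nat_rpow (p := θ - σ - 1)).mpr (by linarith)
      have h2 := (summable_nat_add_iff 1).mpr h
      refine (h2.congr fun i => ?_).mul_left _
      push_cast; ring_nf
    · intro i
      have hi1 : (1:ℝ) ≤ (i:ℝ)+1 := by have : (0:ℝ) ≤ i := Nat.cast_nonneg i; linarith
      have hnorm_f : ‖f (i+1) - f i‖ ≤ σ * ((i:ℝ)+1) ^ (-σ - 1) := by
        have he : f (i+1) - f i = ((((i:ℝ)+1+1) ^ (-σ) - ((i:ℝ)+1) ^ (-σ) : ℝ) : ℂ) := by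
          simp only [hf]; push_cast; ring
        rw [he, Complex.norm_real, Real.norm_eq_abs, abs_sub_comm, abs_of_nonneg]
        · exact rpow_diff_le hσ0 _ hi1
        · have := Real.rpow_le_rpow_of_nonpos (by positivity : (0:ℝ) < (i:ℝ)+1)
            (by linarith : (i:ℝ)+1 ≤ (i:ℝ)+1+1) (by linarith : -σ ≤ 0)
          linarith
      have hnormA : ‖A (i+1)‖ ≤ C * ((i:ℝ)+1) ^ θ := by
        have := hA (i+1); push_cast at this ⊢; exact this
      calc ‖(f (i+1) - f i) • A (i+1)‖ = ‖f (i+1) - f i‖ * ‖A (i+1)‖ := norm_smul _ _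
        _ ≤ (σ * ((i:ℝ)+1) ^ (-σ - 1)) * (C * ((i:ℝ)+1) ^ θ) :=
            mul_le_mul hnorm_f hnormA (norm_nonneg _) (by positivity)
        _ = (C * σ) * (((i:ℝ)+1) ^ (-σ-1) * ((i:ℝ)+1) ^ θ) := by ring
        _ = (C * σ) * ((i:ℝ)+1) ^ (θ - σ - 1) := by
            rw [← Real.rpow_add (by positivity)]; ring_nf
  have h2 : Tendsto (fun N => ∑ i ∈ Finset.range (N-1), (f (i+1) - f i) • A (i+1)) atTop
      (𝓝 (∑' i, (f (i+1) - f i) • A (i+1))) :=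
    hsum.hasSum.tendsto_sum_nat.comp (tendsto_sub_atTop_nat 1)
  have h1 : Tendsto (fun N : ℕ => f (N-1) • A N) atTop (𝓝 0) := by
    have hg0 : Tendsto (fun N : ℕ => C * (N:ℝ) ^ (θ - σ)) atTop (𝓝 0) := by
      have hbase : Tendsto (fun N : ℕ => (N:ℝ) ^ (-(σ - θ))) atTop (𝓝 0) :=
        (tendsto_rpow_neg_atTop (by linarith : 0 < σ - θ)).comp tendsto_natCast_atTop_atTop
      have : (fun N : ℕ => C * (N:ℝ) ^ (θ - σ)) = fun N : ℕ => C * (N:ℝ) ^ (-(σ - θ)) := by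
        funext N; ring_nf
      rw [this]
      simpa using hbase.const_mul C
    apply squeeze_zero_norm' ?_ hg0
    filter_upwards [eventually_ge_atTop 1] with N hN
    have hcast : ((N-1 : ℕ) : ℝ) + 1 = (N : ℝ) := by
      have : ((N-1:ℕ):ℝ) = (N:ℝ) - 1 := by
        rw [Nat.cast_sub hN]; norm_num
      rw [this]; ring
    have hN0 : (0:ℝ) < N := by exact_mod_cast hN
    have hnorm : ‖f (N-1) • A N‖ = ((N:ℝ) ^ (-σ)) * ‖A N‖ := by
      rw [norm_smul]
      congr 1
      simp only [hf, Complex.norm_real, Real.norm_eq_abs]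
      rw [hcast, abs_of_nonneg (Real.rpow_nonneg hN0.le _)]
    rw [hnorm]
    calc ((N:ℝ) ^ (-σ)) * ‖A N‖ ≤ ((N:ℝ) ^ (-σ)) * (C * (N:ℝ) ^ θ) :=
          mul_le_mul_of_nonneg_left (hA N) (Real.rpow_nonneg hN0.le _)
      _ = C * (N:ℝ) ^ (θ - σ) := by
          rw [show θ - σ = -σ + θ by ring, Real.rpow_add hN0]; ring
  refine ⟨0 - ∑' i, (f (i+1) - f i) • A (i+1), ?_⟩
  have := h1.sub h2
  apply this.congr
  intro N
  rw [dirichletPartial_eq]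
  have hbp := Finset.sum_range_by_parts f g N
  simp only [hf, hg, hAdef] at hbp ⊢
  rw [hbp]

/-- For `0 < α < 1`, the coefficients of
`f(s) = (1 - 3^{1-α-s})⁻¹ L(s,χ)`, `χ` the non-principal character mod 3, are completely
multiplicative with `σ_c(f) = 1 - α` and `σ_a(f) = 1`. -/
theorem geometric_times_L_abscissas (α : ℝ) (hα0 : 0 < α) (hα1 : α < 1)
    (χ : DirichletCharacter ℂ 3) (hχ : χ ≠ 1) (a : ℕ → ℂ)
    (ha : ∀ k m : ℕ, ¬ (3 ∣ m) →
      a (3 ^ k * m) = (((3 : ℝ) ^ ((1 - α) * (k : ℝ)) : ℝ) : ℂ) * χ (m : ZMod 3)) :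
    IsCompletelyMultiplicativeFun a ∧ sigmaC a = 1 - α ∧ sigmaA a = 1 ∧
      sigmaA a - sigmaC a = α := by
  have hcm := a_cm ha
  have hr : 1 < (3:ℝ)^(1-α) :=
    Real.one_lt_rpow_iff_of_pos (by norm_num) |>.mpr (Or.inl ⟨by norm_num, by linarith⟩)
  have hconv : ∀ σ : ℝ, 1-α < σ → DirichletConvergesAt a σ := fun σ hσ =>
    dirichlet_converges_of_partial_bound (by linarith)
      (by
        have h0 : 0 < (3:ℝ)^(1-α) - 1 := by linarith
        positivity)
      (A_bound hχ hα1 ha) hσ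
  have hClb : ∀ σ ∈ {σ : ℝ | DirichletConvergesAt a σ}, 1-α ≤ σ := by
    intro σ hσ
    by_contra hlt
    exact not_conv_lt hα1 ha (by linarith) hσ
  have hCne : Set.Nonempty {σ : ℝ | DirichletConvergesAt a σ} :=
    ⟨1, hconv 1 (by linarith)⟩
  have hCbdd : BddBelow {σ : ℝ | DirichletConvergesAt a σ} := ⟨1-α, hClb⟩
  have hsigC : sigmaC a = 1-α := by
    apply le_antisymm
    · apply le_of_forall_pos_le_add
      intro ε hε
      exact csInf_le hCbdd (hconv _ (by linarith))
    · exact le_csInf hCne hClb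
  have hAconv : ∀ σ : ℝ, 1 < σ → DirichletAbsConvergesAt a σ :=
    fun σ hσ => abs_conv hα0 hα1 ha hσ
  have hAlb : ∀ σ ∈ {σ : ℝ | DirichletAbsConvergesAt a σ}, 1 ≤ σ := by
    intro σ hσ
    by_contra hlt
    push_neg at hlt
    have hmaxlt : max σ (1/2) < 1 := max_lt hlt (by norm_num)
    set σ' := (max σ (1/2) + 1)/2 with hσ'def
    have h1 : σ ≤ σ' := by
      have := le_max_left σ (1/2)
      rw [hσ'def]
      linarith
    have h2 : 0 < σ' := by
      have := le_max_right σ (1/2)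
      rw [hσ'def]
      linarith
    have h3 : σ' < 1 := by
      rw [hσ'def]
      linarith
    exact sigmaA_div hχ ha h2 h3 (abs_mono h1 hσ)
  have hAne : Set.Nonempty {σ : ℝ | DirichletAbsConvergesAt a σ} :=
    ⟨2, hAconv 2 (by norm_num)⟩
  have hAbdd : BddBelow {σ : ℝ | DirichletAbsConvergesAt a σ} := ⟨1, hAlb⟩
  have hsigA : sigmaA a = 1 := by
    apply le_antisymm
    · apply le_of_forall_pos_le_add
      intro ε hε
      exact csInf_le hAbdd (hAconv _ (by linarith))
    · exact le_csInf hAne hAlb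
  exact ⟨hcm, hsigC, hsigA, by rw [hsigA, hsigC]; ring⟩
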